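/- Let X = [X₁,…,X_p] ∈ ℝ^{n×p} and suppose {1,…,p} is partitioned into K clusters with representative vectors v₁,…,v_K ∈ ℝⁿ satisfying ‖v_ℓ‖₂ ≤ √n, such that ‖X_j − v_{r(j)}‖₂ ≤ δ√n for all j, where r(j) is the cluster of j and δ ∈ (0,1]. If ε ∼ N(0, σ² I_n), then (1/n)E‖Xᵀε‖_∞ ≤ (σ/√n)(√(2log(2K)) + δ√(2log(2p))). -/

import Mathlib

open MeasureTheory ProbabilityTheory Real
open scoped NNReal ENNReal

private lemma measurable_finset_sup' {α ι : Type*} [MeasurableSpace α] (s : Finset ι) (hs : s.Nonempty)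
    (f : ι → α → ℝ) (hf : ∀ i, Measurable (f i)) :
    Measurable fun ω => s.sup' hs fun i => f i ω := by
  induction hs using Finset.Nonempty.cons_induction with
  | singleton i => simpa using hf i
  | cons i t hit ht ih =>
      have h : (fun ω => (Finset.cons i t hit).sup' (Finset.cons_nonempty hit) fun j => f j ω)
          = fun ω => max (f i ω) (t.sup' ht fun j => f j ω) := by
        funext ω; exact Finset.sup'_cons (H := ht) (f := fun j => f j ω)
      rw [h]
      exact (hf i).max ih

private lemma gauss_pdf_mul (c : ℝ) {V : ℝ≥0} (hV : V ≠ 0) (x : ℝ) :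
    gaussianPDFReal 0 V x * rexp (c * x)
      = rexp (c ^ 2 * V / 2) * gaussianPDFReal (c * V) V x := by
  have hV' : (V : ℝ) ≠ 0 := by exact_mod_cast hV
  simp only [gaussianPDFReal, sub_zero]
  rw [mul_assoc, ← Real.exp_add, mul_left_comm, ← Real.exp_add]
  congr 1
  field_simp
  ring

private lemma integral_exp_gaussian (c : ℝ) (V : ℝ≥0) :
    (∫ x, rexp (c * x) ∂(gaussianReal 0 V)) = rexp (c ^ 2 * V / 2) ∧
      Integrable (fun x => rexp (c * x)) (gaussianReal 0 V) := by
  by_cases hV : V = 0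
  · subst hV
    rw [gaussianReal_zero_var]
    refine ⟨by simp [integral_dirac], ?_⟩
    constructor
    · exact (measurable_id.const_mul c).exp.aestronglyMeasurable
    · simp [HasFiniteIntegral, lintegral_dirac]
  · have hmeas : Measurable fun x => (gaussianPDFReal 0 V x).toNNReal :=
      (measurable_gaussianPDFReal 0 V).real_toNNReal
    have hrw : gaussianReal 0 V = volume.withDensity fun x =>
        ((gaussianPDFReal 0 V x).toNNReal : ℝ≥0∞) :=
      gaussianReal_of_var_ne_zero 0 hV
    have key : (fun x => (gaussianPDFReal 0 V x).toNNReal • rexp (c * x))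
        = fun x => rexp (c ^ 2 * V / 2) * gaussianPDFReal (c * V) V x := by
      ext x
      rw [NNReal.smul_def, Real.coe_toNNReal _ (gaussianPDFReal_nonneg 0 V x)]
      exact gauss_pdf_mul c hV x
    constructor
    · rw [hrw, integral_withDensity_eq_integral_smul hmeas, key, integral_const_mul,
        integral_gaussianPDFReal_eq_one _ hV, mul_one]
    · rw [hrw, integrable_withDensity_iff_integrable_smul hmeas, key]
      exact (integrable_gaussianPDFReal _ _).const_mul _

private lemma mgf_pi (n : ℕ) (V : ℝ≥0) (a : Fin n → ℝ) :
    (∫ e : Fin n → ℝ, rexp (∑ k, a k * e k) ∂(Measure.pi fun _ => gaussianReal 0 V))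
        = rexp ((∑ k, (a k) ^ 2) * V / 2) ∧
      Integrable (fun e : Fin n → ℝ => rexp (∑ k, a k * e k))
        (Measure.pi fun _ => gaussianReal 0 V) := by
  letI : MeasureSpace ℝ := ⟨gaussianReal 0 V⟩
  haveI : SigmaFinite (volume : Measure ℝ) :=
    inferInstanceAs (SigmaFinite (gaussianReal 0 V))
  have hprod : ∀ e : Fin n → ℝ, rexp (∑ k, a k * e k) = ∏ k, rexp (a k * e k) := fun e =>
    Real.exp_sum _ _
  constructor
  · calc (∫ e : Fin n → ℝ, rexp (∑ k, a k * e k) ∂(Measure.pi fun _ => gaussianReal 0 V))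
        = ∫ e : Fin n → ℝ, ∏ k, rexp (a k * e k) := by
          simp_rw [hprod]; rfl
      _ = ∏ k, ∫ x : ℝ, rexp (a k * x) :=
          MeasureTheory.integral_fintype_prod_eq_prod (f := fun k x => rexp (a k * x))
      _ = ∏ k, rexp ((a k) ^ 2 * V / 2) := by
          refine Finset.prod_congr rfl fun k _ => ?_
          exact (integral_exp_gaussian (a k) V).1
      _ = rexp ((∑ k, (a k) ^ 2) * V / 2) := by
          rw [← Real.exp_sum]
          congr 1
          rw [Finset.sum_mul, Finset.sum_div]
  · have : Integrable (fun e : Fin n → ℝ => ∏ k, rexp (a k * e k))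
        (Measure.pi fun _ => gaussianReal 0 V) :=
      MeasureTheory.Integrable.fintype_prod_dep fun k => (integral_exp_gaussian (a k) V).2
    simpa [hprod] using this

private lemma maximal_ineq {Ω : Type*} [MeasurableSpace Ω] (μ : Measure Ω) [IsProbabilityMeasure μ]
    (m : ℕ) (hm : 0 < m) (Z : Fin m → Ω → ℝ) (hZ : ∀ i, Measurable (Z i))
    (τ : ℝ) (hτ : 0 < τ)
    (hint : ∀ (t : ℝ) i, Integrable (fun ω => rexp (t * Z i ω)) μ)
    (hmgf : ∀ (t : ℝ) i, (∫ ω, rexp (t * Z i ω) ∂μ) ≤ rexp (t ^ 2 * τ ^ 2 / 2)) :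
    Integrable (fun ω => ⨆ i, |Z i ω|) μ ∧
      (∫ ω, ⨆ i, |Z i ω| ∂μ) ≤ τ * Real.sqrt (2 * Real.log (2 * m)) := by
  haveI : Nonempty (Fin m) := Fin.pos_iff_nonempty.mp hm
  set M : Ω → ℝ := fun ω => Finset.univ.sup' Finset.univ_nonempty fun i => |Z i ω| with hM
  have hMs : (fun ω => ⨆ i, |Z i ω|) = M := by
    funext ω
    exact (Finset.sup'_univ_eq_ciSup fun i => |Z i ω|).symm
  have hMmeas : Measurable M :=
    measurable_finset_sup' _ _ _ fun i => (hZ i).abs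
  -- pointwise bound on exp (t * M)
  have hptM : ∀ (t : ℝ), 0 ≤ t → ∀ ω,
      rexp (t * M ω) ≤ ∑ i, (rexp (t * Z i ω) + rexp (-(t * Z i ω))) := by
    intro t ht ω
    obtain ⟨i0, -, hi0⟩ := Finset.exists_mem_eq_sup' (Finset.univ_nonempty (α := Fin m))
      fun i => |Z i ω|
    have hMω : M ω = |Z i0 ω| := hi0
    have h1 : t * M ω = |t * Z i0 ω| := by
      rw [hMω, abs_mul, abs_of_nonneg ht]
    calc rexp (t * M ω) = rexp |t * Z i0 ω| := by rw [h1]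
      _ ≤ rexp (t * Z i0 ω) + rexp (-(t * Z i0 ω)) := Real.exp_abs_le _
      _ ≤ ∑ i, (rexp (t * Z i ω) + rexp (-(t * Z i ω))) := by
          refine Finset.single_le_sum (f := fun i => rexp (t * Z i ω) + rexp (-(t * Z i ω)))
            (fun i _ => by positivity) (Finset.mem_univ i0)
  have hii : ∀ (t : ℝ) i, Integrable (fun ω => rexp (t * Z i ω) + rexp (-(t * Z i ω))) μ :=
    fun t i => (hint t i).add (by simpa [neg_mul] using hint (-t) i)
  have hgint : ∀ (t : ℝ), Integrable (fun ω => ∑ i, (rexp (t * Z i ω) + rexp (-(t * Z i ω)))) μ := by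
    intro t
    exact integrable_finset_sum _ fun i _ => hii t i
  -- M is nonneg
  have hM0 : ∀ ω, 0 ≤ M ω := fun ω =>
    le_trans (abs_nonneg (Z (Classical.arbitrary (Fin m)) ω))
      (Finset.le_sup' (fun i => |Z i ω|) (Finset.mem_univ (Classical.arbitrary (Fin m))))
  -- M is integrable
  have hMint : Integrable M μ := by
    refine Integrable.mono' (hgint 1) hMmeas.aestronglyMeasurable (ae_of_all _ fun ω => ?_)
    rw [Real.norm_eq_abs, abs_of_nonneg (hM0 ω)]
    obtain ⟨i0, -, hi0⟩ := Finset.exists_mem_eq_sup' (Finset.univ_nonempty (α := Fin m))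
      fun i => |Z i ω|
    calc M ω = |Z i0 ω| := hi0
      _ ≤ rexp |Z i0 ω| := by linarith [Real.add_one_le_exp |Z i0 ω|]
      _ ≤ rexp (Z i0 ω) + rexp (-(Z i0 ω)) := Real.exp_abs_le _
      _ ≤ ∑ i, (rexp (1 * Z i ω) + rexp (-(1 * Z i ω))) := by
          simp only [one_mul]
          exact Finset.single_le_sum (f := fun i => rexp (Z i ω) + rexp (-Z i ω))
            (fun i _ => by positivity) (Finset.mem_univ i0)
  -- constants
  set L : ℝ := Real.log (2 * m) with hLdef
  have hL : 0 < L := Real.log_pos (by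
    have : (1 : ℝ) ≤ (m : ℝ) := by exact_mod_cast hm
    linarith)
  set t0 : ℝ := Real.sqrt (2 * L) / τ with ht0def
  have hsq : Real.sqrt (2 * L) ^ 2 = 2 * L := Real.sq_sqrt (by linarith)
  have hsqpos : 0 < Real.sqrt (2 * L) := Real.sqrt_pos.mpr (by linarith)
  have ht0 : 0 < t0 := div_pos hsqpos hτ
  -- integrability of exp (t0 * M)
  have hexpMint : Integrable (fun ω => rexp (t0 * M ω)) μ := by
    refine Integrable.mono' (hgint t0) ((hMmeas.const_mul t0).exp.aestronglyMeasurable)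
      (ae_of_all _ fun ω => ?_)
    rw [Real.norm_eq_abs, abs_of_pos (Real.exp_pos _)]
    exact hptM t0 ht0.le ω
  -- Jensen
  have hjen : rexp (t0 * ∫ ω, M ω ∂μ) ≤ ∫ ω, rexp (t0 * M ω) ∂μ := by
    have := ConvexOn.map_integral_le (μ := μ) (s := Set.univ) convexOn_exp
      Real.continuous_exp.continuousOn isClosed_univ
      (f := fun ω => t0 * M ω) (ae_of_all _ fun _ => Set.mem_univ _)
      (hMint.const_mul t0) (by simpa [Function.comp_def] using hexpMint)
    rwa [integral_const_mul] at this
  -- bound on the mgf of M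
  have hsum : (∫ ω, rexp (t0 * M ω) ∂μ) ≤ 2 * m * rexp (t0 ^ 2 * τ ^ 2 / 2) := by
    calc (∫ ω, rexp (t0 * M ω) ∂μ)
        ≤ ∫ ω, ∑ i, (rexp (t0 * Z i ω) + rexp (-(t0 * Z i ω))) ∂μ :=
          integral_mono hexpMint (hgint t0) (hptM t0 ht0.le)
      _ = ∑ i, ((∫ ω, rexp (t0 * Z i ω) ∂μ) + ∫ ω, rexp (-(t0 * Z i ω)) ∂μ) := by
          rw [integral_finset_sum _ (fun i _ => hii t0 i)]
          refine Finset.sum_congr rfl fun i _ => ?_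
          exact integral_add (hint t0 i) (by simpa [neg_mul] using hint (-t0) i)
      _ ≤ ∑ _i : Fin m, (rexp (t0 ^ 2 * τ ^ 2 / 2) + rexp (t0 ^ 2 * τ ^ 2 / 2)) := by
          refine Finset.sum_le_sum fun i _ => add_le_add (hmgf t0 i) ?_
          have := hmgf (-t0) i
          simpa [neg_mul, neg_sq] using this
      _ = 2 * m * rexp (t0 ^ 2 * τ ^ 2 / 2) := by
          rw [Finset.sum_const, Finset.card_univ, Fintype.card_fin]
          ring
  -- conclude
  have hfinal : (∫ ω, M ω ∂μ) ≤ τ * Real.sqrt (2 * L) := by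
    have h2m : (2 : ℝ) * m = rexp L := by
      rw [hLdef, Real.exp_log]
      have : (1 : ℝ) ≤ (m : ℝ) := by exact_mod_cast hm
      linarith
    have ht0sq : t0 ^ 2 * τ ^ 2 / 2 = L := by
      rw [ht0def, div_pow, hsq]
      field_simp
    have : rexp (t0 * ∫ ω, M ω ∂μ) ≤ rexp (2 * L) := by
      calc rexp (t0 * ∫ ω, M ω ∂μ) ≤ ∫ ω, rexp (t0 * M ω) ∂μ := hjen
        _ ≤ 2 * m * rexp (t0 ^ 2 * τ ^ 2 / 2) := hsum
        _ = rexp (2 * L) := by rw [h2m, ht0sq, ← Real.exp_add]; ring_nf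
    have h1 : t0 * ∫ ω, M ω ∂μ ≤ 2 * L := Real.exp_le_exp.mp this
    have h2 : (∫ ω, M ω ∂μ) ≤ 2 * L / t0 := by
      rw [le_div_iff₀ ht0]
      linarith [h1]
    refine h2.trans (le_of_eq ?_)
    rw [ht0def]
    rw [div_div_eq_mul_div, div_eq_iff (ne_of_gt hsqpos)]
    nlinarith [hsq]
  rw [hMs]
  exact ⟨hMint, hfinal⟩

private lemma pi_dirac_zero (n : ℕ) :
    Measure.pi (fun _ : Fin n => Measure.dirac (0 : ℝ))
      = Measure.dirac (fun _ : Fin n => (0 : ℝ)) := by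
  refine Measure.pi_eq fun s hs => ?_
  rw [Measure.dirac_apply' _ (MeasurableSet.univ_pi hs)]
  by_cases h : ∀ i, (0 : ℝ) ∈ s i
  · rw [Set.indicator_of_mem (by simpa [Set.mem_univ_pi] using h)]
    simp only [Pi.one_apply]
    rw [Finset.prod_congr rfl fun i _ => ?_]
    · rw [Finset.prod_const_one]
    · rw [Measure.dirac_apply' _ (hs i), Set.indicator_of_mem (h i)]
      rfl
  · rw [Set.indicator_of_notMem (by simpa [Set.mem_univ_pi] using h)]
    push_neg at h
    obtain ⟨i, hi⟩ := h
    rw [eq_comm]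
    refine Finset.prod_eq_zero (Finset.mem_univ i) ?_
    rw [Measure.dirac_apply' _ (hs i), Set.indicator_of_notMem hi]

/-- Two-step bound under clustering: if the columns of `X` are partitioned into `K`
clusters with representatives `v_ℓ` of norm at most `√n` and cluster radius `δ√n`,
and `ε ∼ N(0, σ² Iₙ)`, then
`(1/n) E‖Xᵀε‖_∞ ≤ (σ/√n)(√(2 log(2K)) + δ √(2 log(2p)))`. -/
theorem stmt15 (n p K : ℕ) (hn : 0 < n) (hp : 0 < p) (hK : 0 < K)
    (X : Matrix (Fin n) (Fin p) ℝ) (r : Fin p → Fin K) (v : Fin K → Fin n → ℝ)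
    (hv : ∀ l, ∑ k, (v l k) ^ 2 ≤ (n : ℝ))
    (δ : ℝ) (hδ : 0 < δ) (hδ1 : δ ≤ 1)
    (hcl : ∀ j, ∑ k, (X k j - v (r j) k) ^ 2 ≤ δ ^ 2 * n)
    (σ : ℝ) (hσ : 0 ≤ σ) :
    (1 / (n : ℝ)) * (∫ e : Fin n → ℝ, (⨆ j : Fin p, |∑ k, X k j * e k|)
        ∂(Measure.pi fun _ : Fin n => gaussianReal 0 ⟨σ ^ 2, sq_nonneg σ⟩))
      ≤ (σ / Real.sqrt n) *
          (Real.sqrt (2 * Real.log (2 * K)) + δ * Real.sqrt (2 * Real.log (2 * p))) := by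
  haveI : Nonempty (Fin p) := Fin.pos_iff_nonempty.mp hp
  haveI : Nonempty (Fin K) := Fin.pos_iff_nonempty.mp hK
  set V : ℝ≥0 := ⟨σ ^ 2, sq_nonneg σ⟩ with hVdef
  have hVcoe : (V : ℝ) = σ ^ 2 := rfl
  set μn : Measure (Fin n → ℝ) := Measure.pi fun _ : Fin n => gaussianReal 0 V with hμn
  have hnpos : (0 : ℝ) < n := by exact_mod_cast hn
  have hsqrtn : Real.sqrt n * Real.sqrt n = (n : ℝ) := Real.mul_self_sqrt (le_of_lt hnpos)
  have hsqrtnpos : 0 < Real.sqrt n := Real.sqrt_pos.mpr hnpos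
  rcases eq_or_lt_of_le hσ with hσ0 | hσpos
  · -- σ = 0
    have hV0 : V = 0 := by
      rw [hVdef]
      ext
      simp [← hσ0]; rfl
    have hμd : μn = Measure.dirac (fun _ : Fin n => (0 : ℝ)) := by
      rw [hμn, hV0]
      simp_rw [gaussianReal_zero_var]
      exact pi_dirac_zero n
    rw [hμd, integral_dirac]
    simp [← hσ0, ciSup_const]
  · -- σ > 0
    haveI : IsProbabilityMeasure μn := by
      rw [hμn]; infer_instance
    -- the two families
    set ZA : Fin K → (Fin n → ℝ) → ℝ := fun l e => ∑ k, v l k * e k with hZA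
    set ZB : Fin p → (Fin n → ℝ) → ℝ := fun j e => ∑ k, (X k j - v (r j) k) * e k with hZB
    have hmeasA : ∀ l, Measurable (ZA l) := fun l =>
      Finset.measurable_sum _ fun k _ => (measurable_pi_apply k).const_mul _
    have hmeasB : ∀ j, Measurable (ZB j) := fun j =>
      Finset.measurable_sum _ fun k _ => (measurable_pi_apply k).const_mul _
    have hrwA : ∀ (t : ℝ) l (e : Fin n → ℝ), t * ZA l e = ∑ k, (t * v l k) * e k := by
      intro t l e
      rw [hZA, Finset.mul_sum]
      exact Finset.sum_congr rfl fun k _ => by ring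
    have hrwB : ∀ (t : ℝ) j (e : Fin n → ℝ), t * ZB j e = ∑ k, (t * (X k j - v (r j) k)) * e k := by
      intro t j e
      rw [hZB, Finset.mul_sum]
      exact Finset.sum_congr rfl fun k _ => by ring
    have hintA : ∀ (t : ℝ) l, Integrable (fun e => rexp (t * ZA l e)) μn := by
      intro t l
      simpa [hrwA t l] using (mgf_pi n V fun k => t * v l k).2
    have hintB : ∀ (t : ℝ) j, Integrable (fun e => rexp (t * ZB j e)) μn := by
      intro t j
      simpa [hrwB t j] using (mgf_pi n V fun k => t * (X k j - v (r j) k)).2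
    have hmgfA : ∀ (t : ℝ) l, (∫ e, rexp (t * ZA l e) ∂μn)
        ≤ rexp (t ^ 2 * (σ * Real.sqrt n) ^ 2 / 2) := by
      intro t l
      have h1 : (∫ e, rexp (t * ZA l e) ∂μn)
          = rexp ((∑ k, (t * v l k) ^ 2) * V / 2) := by
        simp_rw [hrwA t l]
        exact (mgf_pi n V fun k => t * v l k).1
      rw [h1, hVcoe]
      apply Real.exp_le_exp.mpr
      have h2 : (∑ k, (t * v l k) ^ 2) = t ^ 2 * ∑ k, (v l k) ^ 2 := by
        rw [Finset.mul_sum]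
        exact Finset.sum_congr rfl fun k _ => by ring
      rw [h2]
      have h3 : (σ * Real.sqrt n) ^ 2 = σ ^ 2 * n := by
        rw [mul_pow, Real.sq_sqrt (le_of_lt hnpos)]
      rw [h3]
      have h4 : t ^ 2 * ∑ k, (v l k) ^ 2 ≤ t ^ 2 * n :=
        mul_le_mul_of_nonneg_left (hv l) (sq_nonneg t)
      have h5 := mul_le_mul_of_nonneg_right h4 (sq_nonneg σ)
      nlinarith [h5]
    have hmgfB : ∀ (t : ℝ) j, (∫ e, rexp (t * ZB j e) ∂μn)
        ≤ rexp (t ^ 2 * (σ * δ * Real.sqrt n) ^ 2 / 2) := by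
      intro t j
      have h1 : (∫ e, rexp (t * ZB j e) ∂μn)
          = rexp ((∑ k, (t * (X k j - v (r j) k)) ^ 2) * V / 2) := by
        simp_rw [hrwB t j]
        exact (mgf_pi n V fun k => t * (X k j - v (r j) k)).1
      rw [h1, hVcoe]
      apply Real.exp_le_exp.mpr
      have h2 : (∑ k, (t * (X k j - v (r j) k)) ^ 2)
          = t ^ 2 * ∑ k, (X k j - v (r j) k) ^ 2 := by
        rw [Finset.mul_sum]
        exact Finset.sum_congr rfl fun k _ => by ring
      rw [h2]
      have h3 : (σ * δ * Real.sqrt n) ^ 2 = σ ^ 2 * (δ ^ 2 * n) := by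
        rw [mul_pow, mul_pow, Real.sq_sqrt (le_of_lt hnpos)]
        ring
      rw [h3]
      have h4 : t ^ 2 * ∑ k, (X k j - v (r j) k) ^ 2 ≤ t ^ 2 * (δ ^ 2 * n) :=
        mul_le_mul_of_nonneg_left (hcl j) (sq_nonneg t)
      have h5 := mul_le_mul_of_nonneg_right h4 (sq_nonneg σ)
      nlinarith [h5]
    obtain ⟨hAint, hAbound⟩ := maximal_ineq μn K hK ZA hmeasA (σ * Real.sqrt n)
      (mul_pos hσpos hsqrtnpos) hintA hmgfA
    obtain ⟨hBint, hBbound⟩ := maximal_ineq μn p hp ZB hmeasB (σ * δ * Real.sqrt n)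
      (mul_pos (mul_pos hσpos hδ) hsqrtnpos) hintB hmgfB
    -- pointwise decomposition
    have hpt : ∀ e : Fin n → ℝ, (⨆ j : Fin p, |∑ k, X k j * e k|)
        ≤ (⨆ l, |ZA l e|) + (⨆ j, |ZB j e|) := by
      intro e
      refine ciSup_le fun j => ?_
      have hsplit : (∑ k, X k j * e k) = ZA (r j) e + ZB j e := by
        rw [hZA, hZB, ← Finset.sum_add_distrib]
        exact Finset.sum_congr rfl fun k _ => by ring
      calc |∑ k, X k j * e k| ≤ |ZA (r j) e| + |ZB j e| := by
            rw [hsplit]; exact abs_add_le _ _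
        _ ≤ (⨆ l, |ZA l e|) + (⨆ j, |ZB j e|) := by
            gcongr
            · exact le_ciSup (f := fun l => |ZA l e|)
                (Set.Finite.bddAbove (Set.finite_range _)) (r j)
            · exact le_ciSup (f := fun j => |ZB j e|)
                (Set.Finite.bddAbove (Set.finite_range _)) j
    have h0 : ∀ e : Fin n → ℝ, 0 ≤ ⨆ j : Fin p, |∑ k, X k j * e k| := fun e =>
      le_trans (abs_nonneg _)
        (le_ciSup (f := fun j => |∑ k, X k j * e k|)
          (Set.Finite.bddAbove (Set.finite_range _)) (Classical.arbitrary (Fin p)))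
    have hbound : (∫ e, (⨆ j : Fin p, |∑ k, X k j * e k|) ∂μn)
        ≤ σ * Real.sqrt n * Real.sqrt (2 * Real.log (2 * K))
          + σ * δ * Real.sqrt n * Real.sqrt (2 * Real.log (2 * p)) := by
      calc (∫ e, (⨆ j : Fin p, |∑ k, X k j * e k|) ∂μn)
          ≤ ∫ e, ((⨆ l, |ZA l e|) + (⨆ j, |ZB j e|)) ∂μn :=
            integral_mono_of_nonneg (ae_of_all _ h0) (hAint.add hBint) (ae_of_all _ hpt)
        _ = (∫ e, (⨆ l, |ZA l e|) ∂μn) + ∫ e, (⨆ j, |ZB j e|) ∂μn :=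
            integral_add hAint hBint
        _ ≤ _ := add_le_add hAbound hBbound
    refine le_trans (mul_le_mul_of_nonneg_left hbound (by positivity)) (le_of_eq ?_)
    field_simp
    linear_combination (Real.sqrt (2 * Real.log (2 * K))
      + δ * Real.sqrt (2 * Real.log (2 * p))) * hsqrtn
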